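/- Assume there exists a finite-rank strong subgroup X₀ of K^×. Then for every finite subset S of K^× the set {δ(W) : W a finite-rank subgroup of K^× with X₀ ∪ S ⊆ W} ⊆ ℤ attains a minimum, denoted d(S). Moreover, for all finite subsets X, Y, Z of K^×: if d(X ∪ Y) = d(Y), then d(X ∪ Y ∪ Z) = d(Y ∪ Z). (The dimension function associated to the predimension δ satisfies the exchange-type closure axiom.) -/

import Mathlib

set_option maxHeartbeats 1000000
set_option synthInstance.maxHeartbeats 400000
set_option linter.unusedSectionVars false
set_option linter.unusedVariables false


noncomputable section

namespace GreenPoints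

variable {K : Type*} [Field K] [CharZero K]

/-- The rank of a (multiplicative) subgroup of `Kˣ`: the ℤ-module rank of the
underlying abelian group, i.e. the dimension over ℚ of `S ⊗ ℚ`. -/
def grpRank (S : Subgroup Kˣ) : Cardinal := Module.rank ℤ (Additive S)

/-- A subgroup of `Kˣ` has finite rank. -/
def FiniteRank (S : Subgroup Kˣ) : Prop := grpRank S < Cardinal.aleph0

/-- The transcendence degree over ℚ of the subfield of `K` generated by a subset `s` of `K`:
the supremum of the cardinalities of subsets of `s` that are algebraically
independent over ℚ. -/
def tdSet (s : Set K) : Cardinal :=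
  ⨆ t : {t : Set K // t ⊆ s ∧ AlgebraicIndependent ℚ ((↑) : t → K)}, Cardinal.mk t.1

/-- The transcendence degree over ℚ of the subfield of `K` generated by a subgroup of `Kˣ`. -/
def td (S : Subgroup Kˣ) : Cardinal := tdSet (Units.val '' (S : Set Kˣ))

/-- The predimension `δ(S) = 2·td(S) − rk(S ∩ G)` (with respect to the subgroup `G`
of green points). -/
def delta (G S : Subgroup Kˣ) : ℤ :=
  2 * ((td S).toNat : ℤ) - ((grpRank (S ⊓ G)).toNat : ℤ)

/-- `Y` is strong in `T` (with respect to `G`): `δ(W) ≥ δ(Y)` for every finite-rank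
subgroup `W` with `Y ⊆ W ⊆ T`. -/
def StrongIn (G Y T : Subgroup Kˣ) : Prop :=
  ∀ W : Subgroup Kˣ, FiniteRank W → Y ≤ W → W ≤ T → delta G Y ≤ delta G W

/-- `Y` is strong: strong in `Kˣ`. -/
def Strong (G Y : Subgroup Kˣ) : Prop := StrongIn G Y ⊤

/-- A subgroup `S` of `Kˣ` is root-closed: `x ∈ S` whenever `x^n ∈ S` for some `n ≥ 1`. -/
def RootClosed (S : Subgroup Kˣ) : Prop :=
  ∀ (x : Kˣ) (n : ℕ), 1 ≤ n → x ^ n ∈ S → x ∈ S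

/-- The subfield of `K` generated by a subgroup of `Kˣ`. -/
def fieldOf (S : Subgroup Kˣ) : Subfield K := Subfield.closure (Units.val '' (S : Set Kˣ))

section Aux

open Polynomial

/-- Bridge: algebraic over the intermediate-field adjoin iff over the ring adjoin. -/
theorem isAlgebraic_intermediateField_adjoin_iff {F : Type*} [Field F] [Algebra F K]
    (s : Set K) (x : K) :
    IsAlgebraic (IntermediateField.adjoin F s) x ↔ IsAlgebraic (Algebra.adjoin F s) x := by
  set A := Algebra.adjoin F s
  set E := IntermediateField.adjoin F s
  have hle : A ≤ E.toSubalgebra := IntermediateField.algebra_adjoin_le_adjoin F s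
  let ι : A →+* E := (Subalgebra.inclusion hle).toRingHom
  have hι : ∀ a : A, (ι a : K) = (a : K) := fun a => rfl
  have hιinj : Function.Injective ι := fun a b h => by
    apply Subtype.ext
    have := congrArg (Subtype.val : E → K) h
    simpa [hι] using this
  letI : Algebra A E := ι.toAlgebra
  haveI : IsScalarTower A E K := IsScalarTower.of_algebraMap_eq fun a => rfl
  haveI : IsFractionRing A E := by
    refine ⟨⟨?_, ?_, ?_⟩⟩
    · rintro ⟨y, hy⟩
      have hy0 : y ≠ 0 := nonZeroDivisors.ne_zero hy
      have : (algebraMap A E) y ≠ 0 := by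
        intro h
        exact hy0 (hιinj (by rw [map_zero]; exact h))
      exact isUnit_iff_ne_zero.mpr this
    · intro z
      obtain ⟨r, t, hrt⟩ := (IntermediateField.mem_adjoin_iff F (z : K)).1 z.2
      have hmem : ∀ p : MvPolynomial s F, MvPolynomial.aeval (Subtype.val : s → K) p ∈ A := by
        intro p
        have : MvPolynomial.aeval (Subtype.val : s → K) p ∈
            Algebra.adjoin F (Set.range (Subtype.val : s → K)) := by
          rw [Algebra.adjoin_range_eq_range_aeval]
          exact ⟨p, rfl⟩
        simpa [Subtype.range_coe] using this
      by_cases hb : MvPolynomial.aeval (Subtype.val : s → K) t = 0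
      · refine ⟨⟨0, ⟨1, one_mem _⟩⟩, ?_⟩
        have : (z : K) = 0 := by rw [hrt, hb, div_zero]
        simp only [map_one, mul_one, map_zero]
        apply Subtype.ext
        simpa using this
      · refine ⟨⟨⟨_, hmem r⟩, ⟨⟨_, hmem t⟩, mem_nonZeroDivisors_of_ne_zero ?_⟩⟩, ?_⟩
        · intro h
          exact hb (by simpa using congrArg (Subtype.val : A → K) h)
        · apply Subtype.ext
          have halg : ∀ a : A, ((algebraMap A E a : E) : K) = (a : K) := fun a => rfl
          push_cast
          rw [halg, halg, hrt]
          exact div_mul_cancel₀ _ hb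
    · intro a b h
      exact ⟨⟨1, one_mem _⟩, by simpa using hιinj h⟩
  exact (IsFractionRing.isAlgebraic_iff A E K).symm

/-- mono across `≤` of intermediate fields -/
theorem isAlgebraic_le {F : Type*} [Field F] [Algebra F K] {E E' : IntermediateField F K}
    (h : E ≤ E') {x : K} (hx : IsAlgebraic E x) : IsAlgebraic E' x := by
  obtain ⟨p, p0, hp⟩ := hx
  have hcomp : (algebraMap E' K).comp (IntermediateField.inclusion h).toRingHom
      = algebraMap E K := RingHom.ext fun a => rfl
  refine ⟨p.map (IntermediateField.inclusion h).toRingHom, ?_, ?_⟩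
  · refine (Polynomial.map_ne_zero_iff ?_).2 p0
    intro a b hab
    have : (a : K) = (b : K) := congrArg (fun z : E' => (z : K)) hab
    exact Subtype.ext this
  · rw [Polynomial.aeval_def, Polynomial.eval₂_map, hcomp, ← Polynomial.aeval_def]
    exact hp

variable [CharZero K]

/-- The algebraic closure (matroid closure) of a set over `ℚ`. -/
def acl (s : Set K) : Set K := {x | IsAlgebraic (IntermediateField.adjoin ℚ s) x}

theorem field_subset_acl (s : Set K) :
    ((IntermediateField.adjoin ℚ s : IntermediateField ℚ K) : Set K) ⊆ acl s := by
  intro x hx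
  exact isAlgebraic_algebraMap (⟨x, hx⟩ : (IntermediateField.adjoin ℚ s : IntermediateField ℚ K))

theorem subset_acl (s : Set K) : s ⊆ acl s :=
  fun _ hx => field_subset_acl s (IntermediateField.subset_adjoin ℚ s hx)

theorem acl_mono {s t : Set K} (h : s ⊆ t) : acl s ⊆ acl t := fun _ hx =>
  isAlgebraic_le (IntermediateField.adjoin.mono ℚ _ _ h) hx

theorem acl_trans {s t : Set K} (h : t ⊆ acl s) : acl t ⊆ acl s := by
  intro x hx
  set F := IntermediateField.adjoin ℚ s
  set M := IntermediateField.adjoin F t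
  haveI : Algebra.IsAlgebraic F M :=
    IntermediateField.isAlgebraic_adjoin fun y hy => isAlgebraic_iff_isIntegral.1 (h hy)
  have h1 : IntermediateField.adjoin ℚ t ≤ M.restrictScalars ℚ := by
    rw [IntermediateField.adjoin_le_iff]
    intro y hy
    exact IntermediateField.subset_adjoin F t hy
  have h2 : IsAlgebraic (M.restrictScalars ℚ) x := isAlgebraic_le h1 hx
  have h3 : IsAlgebraic M x := h2
  haveI : Algebra.IsIntegral F M := Algebra.isAlgebraic_iff_isIntegral.1 ‹_›
  exact (isIntegral_trans x (isAlgebraic_iff_isIntegral.1 h3)).isAlgebraic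

theorem pair_swap {F : Type*} [Field F] [Algebra F K] {x y : K}
    (hx : Transcendental F x) (hxy : IsAlgebraic (IntermediateField.adjoin F {y}) x) :
    IsAlgebraic (IntermediateField.adjoin F {x}) y := by
  by_cases hy : IsAlgebraic F y
  · exfalso
    haveI : Algebra.IsAlgebraic F (IntermediateField.adjoin F ({y} : Set K)) :=
      IntermediateField.isAlgebraic_adjoin (by
        rintro z rfl
        exact isAlgebraic_iff_isIntegral.1 hy)
    haveI : Algebra.IsIntegral F (IntermediateField.adjoin F ({y} : Set K)) :=
      Algebra.isAlgebraic_iff_isIntegral.1 ‹_›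
    exact hx (isIntegral_trans x (isAlgebraic_iff_isIntegral.1 hxy)).isAlgebraic
  · rw [isAlgebraic_intermediateField_adjoin_iff] at hxy ⊢
    have hg : AlgebraicIndependent F (fun _ : Unit => y) :=
      algebraicIndependent_unique_type_iff.2 hy
    have hpair : ¬ AlgebraicIndependent F (fun o : Option Unit => o.elim x fun _ => y) := by
      rw [hg.option_iff_transcendental x]
      intro hT
      rw [Set.range_const] at hT
      exact hT hxy
    by_contra hyx
    have hgx : AlgebraicIndependent F (fun _ : Unit => x) :=
      algebraicIndependent_unique_type_iff.2 hx
    have hpair' : AlgebraicIndependent F (fun o : Option Unit => o.elim y fun _ => x) := by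
      rw [hgx.option_iff_transcendental y, Set.range_const]
      exact hyx
    apply hpair
    have := hpair'.comp (fun o : Option Unit => o.elim (some ()) fun _ => none)
      (by rintro (_|⟨⟩) (_|⟨⟩) h <;> simp_all)
    convert this using 1
    funext o
    rcases o with _ | ⟨⟩ <;> rfl

theorem acl_exchange {s : Set K} {x y : K} (hx : x ∈ acl (insert y s)) (hxs : x ∉ acl s) :
    y ∈ acl (insert x s) := by
  set F := IntermediateField.adjoin ℚ s with hF
  have key : ∀ z w : K, IsAlgebraic (IntermediateField.adjoin ℚ (insert z s)) w ↔
      IsAlgebraic (IntermediateField.adjoin F {z}) w := by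
    intro z w
    have h := IntermediateField.adjoin_adjoin_left ℚ s {z}
    rw [Set.union_singleton] at h
    constructor
    · intro hw
      rw [← h] at hw
      exact hw
    · intro hw
      rw [← h]
      exact hw
  exact (key x y).2 (pair_swap hxs ((key y x).1 hx))

/-- Algebraic independence (over `ℚ`) of a subset of `K`. -/
def Indep (t : Set K) : Prop := AlgebraicIndependent ℚ ((↑) : t → K)

def IndepF (t : Finset K) : Prop := Indep (↑t : Set K)

theorem Indep.mono {s t : Set K} (h : t ⊆ s) (hs : Indep s) : Indep t :=
  AlgebraicIndependent.mono h hs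

theorem indep_empty : Indep (∅ : Set K) := algebraicIndependent_empty

theorem indep_insert_iff {t : Set K} {x : K} (hxt : x ∉ t) (ht : Indep t) :
    Indep (insert x t) ↔ x ∉ acl t := by
  classical
  have hopt := ht.option_iff_transcendental x
  rw [Subtype.range_coe] at hopt
  have hacl : x ∈ acl t ↔ IsAlgebraic (Algebra.adjoin ℚ t) x :=
    isAlgebraic_intermediateField_adjoin_iff t x
  have hfun : ∀ z : (insert x t : Set K),
      (z : K) = (fun o : Option t => o.elim x ((↑) : t → K))
        (Set.subtypeInsertEquivOption hxt z) := by
    intro z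
    by_cases h : (z : K) = x <;> simp [Set.subtypeInsertEquivOption, h]
  constructor
  · intro h hmem
    have h2 : AlgebraicIndependent ℚ (fun o : Option t => o.elim x ((↑) : t → K)) := by
      have h3 := h.comp (Set.subtypeInsertEquivOption hxt).symm (Equiv.injective _)
      convert h3 using 1
      funext o
      have h4 := hfun ((Set.subtypeInsertEquivOption hxt).symm o)
      rw [Equiv.apply_symm_apply] at h4
      exact h4.symm
    exact (hopt.1 h2) (hacl.1 hmem)
  · intro h
    have h2 : AlgebraicIndependent ℚ (fun o : Option t => o.elim x ((↑) : t → K)) :=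
      hopt.2 fun ha => h (hacl.2 ha)
    have h3 := h2.comp (Set.subtypeInsertEquivOption hxt) (Equiv.injective _)
    show AlgebraicIndependent ℚ _
    convert h3 using 1
    funext z
    exact hfun z

theorem indep_diff_not_acl {t : Set K} (ht : Indep t) {x : K} (hx : x ∈ t) :
    x ∉ acl (t \ {x}) := by
  have h1 : Indep (t \ {x}) := ht.mono Set.diff_subset
  have hxd : x ∉ t \ {x} := by simp
  have h2 : Indep (insert x (t \ {x})) := by
    rw [Set.insert_diff_singleton, Set.insert_eq_self.mpr hx]
    exact ht
  exact (indep_insert_iff hxd h1).1 h2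

/-- The exchange-based cardinality bound: an independent set inside the algebraic closure
of `t` has at most `t.card` elements. -/
theorem card_le_of_subset_acl [DecidableEq K] :
    ∀ (n : ℕ) (u t : Finset K), (u \ t).card ≤ n → IndepF u → (↑u : Set K) ⊆ acl ↑t →
      u.card ≤ t.card := by
  intro n
  induction n with
  | zero =>
    intro u t hcard _ _
    have : u \ t = ∅ := Finset.card_eq_zero.1 (Nat.le_zero.1 hcard)
    exact Finset.card_le_card fun z hz => by
      by_contra hzt
      exact absurd (Finset.mem_sdiff.2 ⟨hz, hzt⟩) (by simp [this])
  | succ n IH =>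
    intro u t hcard hu hsub
    classical
    by_cases husub : u ⊆ t
    · exact Finset.card_le_card husub
    obtain ⟨x, hxu, hxt⟩ := Finset.not_subset.1 husub
    -- minimal t₀ ⊆ t with x ∈ acl t₀
    obtain ⟨t₀, ht₀mem, ht₀min⟩ :=
      Finset.exists_min_image (t.powerset.filter fun t' : Finset K => x ∈ acl (↑t' : Set K))
        Finset.card ⟨t, by simpa using hsub hxu⟩
    rw [Finset.mem_filter, Finset.mem_powerset] at ht₀mem
    obtain ⟨ht₀t, hxt₀⟩ := ht₀mem
    -- t₀ has an element not in u
    have hexy : ∃ y ∈ t₀, y ∉ u := by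
      by_contra hall
      push_neg at hall
      have ht₀u : (↑t₀ : Set K) ⊆ (↑u : Set K) \ {x} := by
        intro z hz
        refine ⟨hall z hz, ?_⟩
        simp only [Set.mem_singleton_iff]
        rintro rfl
        exact hxt (ht₀t hz)
      exact indep_diff_not_acl hu (by exact_mod_cast hxu)
        (acl_mono ht₀u hxt₀)
    obtain ⟨y, hyt₀, hyu⟩ := hexy
    -- minimality: x ∉ acl (t₀.erase y)
    have hxnot : x ∉ acl (↑(t₀.erase y) : Set K) := by
      intro hmem
      have hlt : (t₀.erase y).card < t₀.card := Finset.card_erase_lt_of_mem hyt₀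
      have := ht₀min (t₀.erase y) (by
        rw [Finset.mem_filter, Finset.mem_powerset]
        exact ⟨(Finset.erase_subset y t₀).trans ht₀t, hmem⟩)
      omega
    -- exchange
    have hxin : x ∈ acl (insert y (↑(t₀.erase y) : Set K)) := by
      have : insert y (↑(t₀.erase y) : Set K) = ↑t₀ := by
        rw [← Finset.coe_insert, Finset.insert_erase hyt₀]
      rwa [this]
    have hy : y ∈ acl (insert x (↑(t₀.erase y) : Set K)) := acl_exchange hxin hxnot
    have hy' : y ∈ acl (insert x (↑(t.erase y) : Set K)) := by
      refine acl_mono ?_ hy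
      apply Set.insert_subset_insert
      exact_mod_cast Finset.coe_subset.2 (fun z hz =>
        Finset.mem_erase.2 ⟨(Finset.mem_erase.1 hz).1, ht₀t (Finset.mem_erase.1 hz).2⟩)
    have hyt : y ∈ t := ht₀t hyt₀
    have hxery : x ∉ t.erase y := fun hmem => hxt (Finset.erase_subset _ _ hmem)
    have hcard' : (insert x (t.erase y)).card = t.card := by
      rw [Finset.card_insert_of_notMem hxery, Finset.card_erase_of_mem hyt]
      have : 1 ≤ t.card := Finset.card_pos.2 ⟨y, hyt⟩
      omega
    have hcoe : (↑(insert x (t.erase y)) : Set K) = insert x (↑(t.erase y) : Set K) := by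
      push_cast
      rfl
    have hsub' : (↑u : Set K) ⊆ acl ↑(insert x (t.erase y)) := by
      have htsub : (↑t : Set K) ⊆ acl ↑(insert x (t.erase y)) := by
        intro z hz
        by_cases hzy : z = y
        · subst hzy
          rwa [hcoe]
        · apply subset_acl
          rw [hcoe]
          refine Set.mem_insert_of_mem _ ?_
          rw [Finset.coe_erase]
          exact ⟨hz, hzy⟩
      exact fun z hz => acl_trans htsub (hsub hz)
    have hdec : (u \ insert x (t.erase y)).card ≤ n := by
      have hsubset : u \ insert x (t.erase y) ⊆ (u \ t).erase x := by
        intro z hz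
        rw [Finset.mem_sdiff] at hz
        rw [Finset.mem_erase, Finset.mem_sdiff]
        have hzx : z ≠ x := fun h => hz.2 (by rw [h]; exact Finset.mem_insert_self x _)
        refine ⟨hzx, hz.1, fun hzt => ?_⟩
        have hzy : z ≠ y := fun h => hyu (h ▸ hz.1)
        exact hz.2 (Finset.mem_insert_of_mem (Finset.mem_erase.2 ⟨hzy, hzt⟩))
      have h1 : ((u \ t).erase x).card < (u \ t).card :=
        Finset.card_erase_lt_of_mem (Finset.mem_sdiff.2 ⟨hxu, hxt⟩)
      have h2 := Finset.card_le_card hsubset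
      omega
    have := IH u (insert x (t.erase y)) hdec hu hsub'
    omega

theorem exists_basis_from (s : Set K) (n : ℕ)
    (hbound : ∀ t : Finset K, ↑t ⊆ s → IndepF t → t.card ≤ n) :
    ∀ (m : ℕ) (b₀ : Finset K), ↑b₀ ⊆ s → IndepF b₀ → n + 1 - b₀.card ≤ m →
      ∃ b : Finset K, b₀ ⊆ b ∧ ↑b ⊆ s ∧ IndepF b ∧ s ⊆ acl ↑b := by
  classical
  intro m
  induction m with
  | zero =>
    intro b₀ hb₀s hb₀ hm
    exact absurd (hbound b₀ hb₀s hb₀) (by omega)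
  | succ m IH =>
    intro b₀ hb₀s hb₀ hm
    by_cases hdone : s ⊆ acl ↑b₀
    · exact ⟨b₀, subset_rfl, hb₀s, hb₀, hdone⟩
    · obtain ⟨x, hxs, hxacl⟩ := Set.not_subset.1 hdone
      have hxb₀ : x ∉ (↑b₀ : Set K) := fun h => hxacl (subset_acl _ h)
      have hind : Indep (insert x (↑b₀ : Set K)) := (indep_insert_iff hxb₀ hb₀).2 hxacl
      have hindF : IndepF (insert x b₀) := by
        show Indep _
        rw [Finset.coe_insert]
        exact hind
      have hcard : (insert x b₀).card = b₀.card + 1 :=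
        Finset.card_insert_of_notMem (by exact_mod_cast hxb₀)
      have hble := hbound b₀ hb₀s hb₀
      obtain ⟨b, hb1, hb2, hb3, hb4⟩ := IH (insert x b₀)
        (by rw [Finset.coe_insert]; exact Set.insert_subset hxs hb₀s) hindF (by omega)
      exact ⟨b, (Finset.subset_insert x b₀).trans hb1, hb2, hb3, hb4⟩

theorem exists_basis (s : Set K) (n : ℕ)
    (hbound : ∀ t : Finset K, ↑t ⊆ s → IndepF t → t.card ≤ n) :
    ∃ b : Finset K, ↑b ⊆ s ∧ IndepF b ∧ s ⊆ acl ↑b := by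
  obtain ⟨b, _, h2, h3, h4⟩ := exists_basis_from s n hbound (n + 1) ∅
    (by simp) (by show Indep _; rw [Finset.coe_empty]; exact indep_empty) (by omega)
  exact ⟨b, h2, h3, h4⟩


theorem mk_le_of_subset_acl {t : Set K} {b : Finset K} (ht : Indep t) (hsub : t ⊆ acl ↑b) :
    Cardinal.mk t ≤ b.card := by
  classical
  have hfin : t.Finite := by
    by_contra hinf
    have hinf' : t.Infinite := hinf
    obtain ⟨f, hfsub, hfcard⟩ := hinf'.exists_subset_card_eq (b.card + 1)
    have hf : IndepF f := ht.mono hfsub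
    have := card_le_of_subset_acl (f \ b).card f b le_rfl hf fun z hz => hsub (hfsub hz)
    omega
  have hteq : Cardinal.mk t = (hfin.toFinset.card : Cardinal) := by
    rw [← Cardinal.mk_coe_finset]
    exact Cardinal.mk_congr (Equiv.setCongr hfin.coe_toFinset.symm)
  rw [hteq, Nat.cast_le]
  refine card_le_of_subset_acl _ _ b le_rfl ?_ ?_
  · show Indep _
    rw [hfin.coe_toFinset]
    exact ht
  · rw [hfin.coe_toFinset]
    exact hsub

theorem card_le_tdSet {s : Set K} {b : Finset K} (hbs : ↑b ⊆ s) (hb : IndepF b) :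
    (b.card : Cardinal) ≤ tdSet s := by
  have := le_ciSup (f := fun t : {t : Set K // t ⊆ s ∧ AlgebraicIndependent ℚ ((↑) : t → K)} =>
      Cardinal.mk t.1) (Cardinal.bddAbove_range _)
    (⟨(↑b : Set K), hbs, hb⟩ : {t : Set K // t ⊆ s ∧ AlgebraicIndependent ℚ ((↑) : t → K)})
  simpa [tdSet, Cardinal.mk_coe_finset] using this

theorem tdSet_eq_card {s : Set K} {b : Finset K} (hbs : ↑b ⊆ s) (hb : IndepF b)
    (hacl : s ⊆ acl ↑b) : tdSet s = b.card := by
  refine le_antisymm (ciSup_le' ?_) (card_le_tdSet hbs hb)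
  rintro ⟨t, hts, htind⟩
  exact mk_le_of_subset_acl htind fun z hz => hacl (hts hz)

theorem tdSet_congr {A A' : Set K} (h1 : A ⊆ A') (h2 : A' ⊆ acl A) (n : ℕ)
    (hbound : ∀ t : Finset K, ↑t ⊆ A → IndepF t → t.card ≤ n) : tdSet A' = tdSet A := by
  obtain ⟨b, hb1, hb2, hb3⟩ := exists_basis A n hbound
  have hA'acl : A' ⊆ acl ↑b := fun z hz => acl_trans hb3 (h2 hz)
  rw [tdSet_eq_card hb1 hb2 hb3, tdSet_eq_card (hb1.trans h1) hb2 hA'acl]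

theorem tdSet_le (s : Set K) (n : ℕ)
    (hbound : ∀ t : Finset K, ↑t ⊆ s → IndepF t → t.card ≤ n) : tdSet s ≤ n := by
  obtain ⟨b, hb1, hb2, hb3⟩ := exists_basis s n hbound
  rw [tdSet_eq_card hb1 hb2 hb3]
  exact_mod_cast Nat.cast_le.2 (hbound b hb1 hb2)

theorem tdSet_submodular (A B : Set K) (n : ℕ)
    (hbound : ∀ t : Finset K, ↑t ⊆ A ∪ B → IndepF t → t.card ≤ n) :
    tdSet (A ∪ B) + tdSet (A ∩ B) ≤ tdSet A + tdSet B := by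
  classical
  -- basis of A ∩ B
  obtain ⟨b₀, hb₀1, hb₀2, hb₀3⟩ := exists_basis (A ∩ B) n
    (fun t ht hind => hbound t (ht.trans (Set.inter_subset_left.trans Set.subset_union_left)) hind)
  -- extend to basis of A ∪ B
  obtain ⟨b, hbb₀, hb1, hb2, hb3⟩ := exists_basis_from (A ∪ B) n hbound (n + 1) b₀
    (hb₀1.trans (Set.inter_subset_left.trans Set.subset_union_left)) hb₀2 (by omega)
  have hAB : tdSet (A ∪ B) = b.card := tdSet_eq_card hb1 hb2 hb3
  have hABi : tdSet (A ∩ B) = b₀.card := tdSet_eq_card hb₀1 hb₀2 hb₀3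
  set bA : Finset K := b.filter (fun z => z ∈ A) with hbA
  set bB : Finset K := b.filter (fun z => z ∈ B) with hbB
  have hbAs : (↑bA : Set K) ⊆ A := fun z hz => by
    rw [hbA] at hz; simp only [Finset.coe_filter, Set.mem_setOf_eq] at hz; exact hz.2
  have hbBs : (↑bB : Set K) ⊆ B := fun z hz => by
    rw [hbB] at hz; simp only [Finset.coe_filter, Set.mem_setOf_eq] at hz; exact hz.2
  have hbAi : IndepF bA := hb2.mono (by exact_mod_cast Finset.filter_subset _ b)
  have hbBi : IndepF bB := hb2.mono (by exact_mod_cast Finset.filter_subset _ b)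
  have hcard : b.card + b₀.card ≤ bA.card + bB.card := by
    have hunion : bA ∪ bB = b := by
      ext z
      simp only [hbA, hbB, Finset.mem_union, Finset.mem_filter]
      constructor
      · rintro (⟨h, _⟩ | ⟨h, _⟩) <;> exact h
      · intro hz
        rcases hb1 (by exact_mod_cast hz) with hA | hB
        · exact Or.inl ⟨hz, hA⟩
        · exact Or.inr ⟨hz, hB⟩
    have hinter : b₀ ⊆ bA ∩ bB := by
      intro z hz
      have hzb : z ∈ b := hbb₀ hz
      have hzAB := hb₀1 (by exact_mod_cast hz)
      rw [Finset.mem_inter, hbA, hbB, Finset.mem_filter, Finset.mem_filter]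
      exact ⟨⟨hzb, hzAB.1⟩, hzb, hzAB.2⟩
    have h1 := Finset.card_union_add_card_inter bA bB
    have h2 := Finset.card_le_card hinter
    rw [hunion] at h1
    omega
  have h3 : (bA.card : Cardinal) ≤ tdSet A := card_le_tdSet hbAs hbAi
  have h4 : (bB.card : Cardinal) ≤ tdSet B := card_le_tdSet hbBs hbBi
  rw [hAB, hABi]
  calc ((b.card : Cardinal) + b₀.card) = ((b.card + b₀.card : ℕ) : Cardinal) := by push_cast; rfl
    _ ≤ ((bA.card + bB.card : ℕ) : Cardinal) := by exact_mod_cast hcard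
    _ = (bA.card : Cardinal) + bB.card := by push_cast; rfl
    _ ≤ tdSet A + tdSet B := add_le_add h3 h4

/-- The submodule of `Additive Kˣ` associated to a subgroup of `Kˣ`. -/
def sgm (S : Subgroup Kˣ) : Submodule ℤ (Additive Kˣ) :=
  AddSubgroup.toIntSubmodule (Subgroup.toAddSubgroup S)

theorem mem_sgm {S : Subgroup Kˣ} {a : Additive Kˣ} : a ∈ sgm S ↔ Additive.toMul a ∈ S :=
  Iff.rfl

/-- `Additive S` is linearly equivalent to the associated submodule. -/
def sgmEquiv (S : Subgroup Kˣ) : Additive S ≃ₗ[ℤ] sgm S :=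
  AddEquiv.toIntLinearEquiv
    { toFun := fun x => ⟨Additive.ofMul ((Additive.toMul x : S) : Kˣ), (Additive.toMul x : S).2⟩
      invFun := fun z => Additive.ofMul (⟨Additive.toMul z.1, z.2⟩ : S)
      left_inv := fun x => rfl
      right_inv := fun z => rfl
      map_add' := fun x y => rfl }

theorem grpRank_eq_rank_sgm (S : Subgroup Kˣ) :
    grpRank S = Module.rank ℤ (sgm S) := (sgmEquiv S).rank_eq

theorem grpRank_mono {S T : Subgroup Kˣ} (h : S ≤ T) : grpRank S ≤ grpRank T := by
  rw [grpRank_eq_rank_sgm, grpRank_eq_rank_sgm]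
  exact Submodule.rank_mono ((AddSubgroup.toIntSubmodule.le_iff_le.2
    (Subgroup.toAddSubgroup.le_iff_le.2 h)))

theorem sgm_sup (W V : Subgroup Kˣ) : sgm (W ⊔ V) = sgm W ⊔ sgm V := by
  unfold sgm
  rw [map_sup, map_sup]

theorem sgm_inf (W V : Subgroup Kˣ) : sgm (W ⊓ V) = sgm W ⊓ sgm V := by
  unfold sgm
  rw [map_inf, map_inf]

theorem grpRank_sup_add_inf (W V : Subgroup Kˣ) :
    grpRank (W ⊔ V) + grpRank (W ⊓ V) = grpRank W + grpRank V := by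
  rw [grpRank_eq_rank_sgm, grpRank_eq_rank_sgm, grpRank_eq_rank_sgm, grpRank_eq_rank_sgm,
    sgm_sup, sgm_inf]
  exact Submodule.rank_sup_add_rank_inf_eq (sgm W) (sgm V)

theorem grpRank_sup_le (W V : Subgroup Kˣ) :
    grpRank (W ⊔ V) ≤ grpRank W + grpRank V := by
  rw [← grpRank_sup_add_inf W V]
  exact self_le_add_right _ _

theorem sgm_closure (s : Set Kˣ) :
    sgm (Subgroup.closure s) = Submodule.span ℤ (Additive.ofMul '' s) := by
  apply le_antisymm
  · have h1 : Subgroup.closure s ≤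
        Subgroup.toAddSubgroup.symm (AddSubgroup.toIntSubmodule.symm
          (Submodule.span ℤ (Additive.ofMul '' s))) := by
      rw [Subgroup.closure_le]
      intro x hx
      show Additive.ofMul x ∈ Submodule.span ℤ (Additive.ofMul '' s)
      exact Submodule.subset_span ⟨x, hx, rfl⟩
    intro a ha
    have := h1 (mem_sgm.1 ha)
    exact this
  · rw [Submodule.span_le]
    rintro a ⟨x, hx, rfl⟩
    exact mem_sgm.2 (Subgroup.subset_closure hx)

theorem grpRank_closure_le (s : Finset Kˣ) :
    grpRank (Subgroup.closure (↑s : Set Kˣ)) ≤ s.card := by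
  rw [grpRank_eq_rank_sgm, sgm_closure]
  refine (rank_span_le _).trans ?_
  refine (Cardinal.mk_image_le).trans ?_
  simp

/-- Algebraically independent subsets of the image of a subgroup give
linearly independent families, so `td S ≤ grpRank S`. -/
theorem indep_mk_le_grpRank (S : Subgroup Kˣ) {t : Set K}
    (hts : t ⊆ Units.val '' (S : Set Kˣ)) (htind : AlgebraicIndependent ℚ ((↑) : t → K)) :
    Cardinal.mk t ≤ grpRank S := by
  classical
  -- the members of t are nonzero
  have hne : ∀ z : t, (z : K) ≠ 0 := by
    rintro ⟨z, hz⟩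
    obtain ⟨w, _, rfl⟩ := hts hz
    exact w.ne_zero
  have hmem : ∀ z : t, Units.mk0 (z : K) (hne z) ∈ S := by
    rintro ⟨z, hz⟩
    obtain ⟨w, hw, hweq⟩ := hts hz
    have heq : Units.mk0 z (hne ⟨z, hz⟩) = w := Units.ext (by simpa using hweq.symm)
    show Units.mk0 z (hne ⟨z, hz⟩) ∈ S
    rw [heq]
    exact hw
  set f : t → Additive S := fun z => Additive.ofMul (⟨Units.mk0 (z : K) (hne z), hmem z⟩ : S)
    with hf
  have hli : LinearIndependent ℤ f := by
    rw [linearIndependent_iff]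
    intro l hl
    by_contra hl0
    -- get the multiplicative relation in K
    have hrel : ∏ z ∈ l.support, (z : K) ^ (l z) = 1 := by
      have h1 := congrArg (fun a : Additive S => ((Additive.toMul a : S) : Kˣ)) hl
      simp only [Finsupp.linearCombination_apply, Finsupp.sum] at h1
      have h2 : ∀ (F : Finset t) ,
          ((Additive.toMul (∑ z ∈ F, l z • f z) : S) : Kˣ)
            = ∏ z ∈ F, (Units.mk0 (z : K) (hne z)) ^ (l z) := by
        intro F
        induction F using Finset.induction with
        | empty => simp
        | insert a s hx ih =>
          rw [Finset.sum_insert hx, Finset.prod_insert hx, ← ih]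
          simp [hf]
      rw [h2] at h1
      have h3 := congrArg (Units.coeHom K) h1
      simp only [map_prod, map_zpow, map_one] at h3
      simpa using h3
    -- convert to a polynomial relation
    set a : t →₀ ℕ := l.mapRange Int.toNat Int.toNat_zero with ha
    set b : t →₀ ℕ := (-l).mapRange Int.toNat Int.toNat_zero with hb
    have hab : a ≠ b := by
      intro h
      apply hl0
      ext z
      simp only [Finsupp.coe_zero, Pi.zero_apply]
      have h1 : a z = b z := by rw [h]
      rw [ha, hb] at h1
      simp only [Finsupp.mapRange_apply, Finsupp.coe_neg, Pi.neg_apply] at h1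
      omega
    have hprodeq : ∏ z ∈ l.support, (z : K) ^ (a z) = ∏ z ∈ l.support, (z : K) ^ (b z) := by
      have : ∀ z ∈ l.support, (z : K) ^ (l z) = (z : K) ^ (a z) / (z : K) ^ (b z) := by
        intro z _
        have hz : (l z : ℤ) = (a z : ℤ) - (b z : ℤ) := by
          simp only [ha, hb, Finsupp.mapRange_apply, Finsupp.coe_neg, Pi.neg_apply]
          omega
        rw [hz, zpow_sub₀ (hne z), zpow_natCast, zpow_natCast]
      rw [Finset.prod_congr rfl this, Finset.prod_div_distrib] at hrel
      have hden : ∏ z ∈ l.support, (z : K) ^ (b z) ≠ 0 :=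
        Finset.prod_ne_zero_iff.2 fun z _ => pow_ne_zero _ (hne z)
      field_simp at hrel
      exact hrel
    -- the polynomial
    set P : MvPolynomial t ℚ := MvPolynomial.monomial a 1 - MvPolynomial.monomial b 1 with hP
    have hPne : P ≠ 0 := by
      intro h
      have h2 := congrArg (MvPolynomial.coeff a) h
      rw [hP, MvPolynomial.coeff_sub, MvPolynomial.coeff_monomial, MvPolynomial.coeff_monomial,
        if_pos rfl, if_neg (fun hh : b = a => hab hh.symm), MvPolynomial.coeff_zero] at h2
      norm_num at h2
    apply hPne
    have haev : ∀ (c : t →₀ ℕ), c.support ⊆ l.support →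
        MvPolynomial.aeval ((↑) : t → K) (MvPolynomial.monomial c (1 : ℚ))
          = ∏ z ∈ l.support, (z : K) ^ (c z) := by
      intro c hcsub
      rw [MvPolynomial.aeval_monomial, map_one, one_mul]
      exact Finsupp.prod_of_support_subset c hcsub (fun i k => (i : K) ^ k)
        fun i _ => pow_zero _
    have hasup : a.support ⊆ l.support := by
      rw [ha]; exact (Finsupp.support_mapRange).trans subset_rfl
    have hbsup : b.support ⊆ l.support := by
      rw [hb]
      refine (Finsupp.support_mapRange).trans ?_
      simp
    refine algebraicIndependent_iff.1 htind P ?_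
    rw [hP, map_sub, haev a hasup, haev b hbsup, hprodeq, sub_self]
  have := hli.cardinal_le_rank
  exact this

/-- image of a subgroup in `K`. -/
def gset (S : Subgroup Kˣ) : Set K := Units.val '' (S : Set Kˣ)

theorem td_def' (S : Subgroup Kˣ) : td S = tdSet (gset S) := rfl

theorem indep_card_le (S : Subgroup Kˣ) {t : Finset K} (hts : ↑t ⊆ gset S) (hind : IndepF t) :
    (t.card : Cardinal) ≤ grpRank S := by
  have h := indep_mk_le_grpRank S hts hind
  refine le_trans (le_of_eq ?_) h
  rw [← Cardinal.mk_coe_finset]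
  exact Cardinal.mk_congr (Equiv.subtypeEquivRight fun x => by simp)

theorem indep_card_le_toNat (S : Subgroup Kˣ) (hS : FiniteRank S) {t : Finset K}
    (hts : ↑t ⊆ gset S) (hind : IndepF t) : t.card ≤ (grpRank S).toNat := by
  have h := Cardinal.toNat_le_toNat (indep_card_le S hts hind) hS
  simpa using h

theorem gset_mono {S T : Subgroup Kˣ} (h : S ≤ T) : gset S ⊆ gset T := by
  rintro z ⟨u, hu, rfl⟩
  exact ⟨u, h hu, rfl⟩

theorem gset_inf (W V : Subgroup Kˣ) : gset (W ⊓ V) = gset W ∩ gset V := by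
  apply subset_antisymm
  · exact Set.subset_inter (gset_mono inf_le_left) (gset_mono inf_le_right)
  · rintro z ⟨⟨u, hu, rfl⟩, ⟨v, hv, hveq⟩⟩
    have : v = u := Units.ext hveq
    subst this
    exact ⟨v, ⟨hu, hv⟩, rfl⟩

/-- units with value in an intermediate field form a subgroup. -/
def unitsOf (E : IntermediateField ℚ K) : Subgroup Kˣ where
  carrier := {u : Kˣ | (u : K) ∈ E}
  one_mem' := by
    simp only [Set.mem_setOf_eq, Units.val_one]
    exact one_mem E
  mul_mem' := by
    intro a b ha hb
    simp only [Set.mem_setOf_eq, Units.val_mul]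
    exact mul_mem ha hb
  inv_mem' := by
    intro a ha
    show ((a⁻¹ : Kˣ) : K) ∈ E
    rw [Units.val_inv_eq_inv_val]
    exact inv_mem ha

theorem gset_sup_subset_acl (W V : Subgroup Kˣ) :
    gset (W ⊔ V) ⊆ acl (gset W ∪ gset V) := by
  set E := IntermediateField.adjoin ℚ (gset W ∪ gset V)
  have hW : W ≤ unitsOf E := fun u hu =>
    IntermediateField.subset_adjoin ℚ _ (Or.inl ⟨u, hu, rfl⟩)
  have hV : V ≤ unitsOf E := fun u hu =>
    IntermediateField.subset_adjoin ℚ _ (Or.inr ⟨u, hu, rfl⟩)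
  rintro z ⟨u, hu, rfl⟩
  exact field_subset_acl _ ((sup_le hW hV) hu)

theorem gset_union_subset (W V : Subgroup Kˣ) : gset W ∪ gset V ⊆ gset (W ⊔ V) :=
  Set.union_subset (gset_mono le_sup_left) (gset_mono le_sup_right)

theorem td_sup_eq (W V : Subgroup Kˣ) (h : FiniteRank (W ⊔ V)) :
    td (W ⊔ V) = tdSet (gset W ∪ gset V) := by
  rw [td_def']
  exact tdSet_congr (gset_union_subset W V) (gset_sup_subset_acl W V) ((grpRank (W ⊔ V)).toNat)
    fun t ht hind => indep_card_le_toNat _ h (ht.trans (gset_union_subset W V)) hind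

theorem td_toNat_submodular (W V : Subgroup Kˣ) (hW : FiniteRank W) (hV : FiniteRank V) :
    (td (W ⊔ V)).toNat + (td (W ⊓ V)).toNat ≤ (td W).toNat + (td V).toNat := by
  have hWV : FiniteRank (W ⊔ V) :=
    lt_of_le_of_lt (grpRank_sup_le W V) (Cardinal.add_lt_aleph0 hW hV)
  set n := (grpRank (W ⊔ V)).toNat
  have hbound : ∀ t : Finset K, ↑t ⊆ gset W ∪ gset V → IndepF t → t.card ≤ n :=
    fun t ht hind => indep_card_le_toNat _ hWV (ht.trans (gset_union_subset W V)) hind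
  have hsub := tdSet_submodular (gset W) (gset V) n hbound
  have h1 : td (W ⊔ V) = tdSet (gset W ∪ gset V) := td_sup_eq W V hWV
  have h2 : td (W ⊓ V) = tdSet (gset W ∩ gset V) := by rw [td_def', gset_inf]
  -- finiteness of each td
  have hfW : td W < Cardinal.aleph0 := lt_of_le_of_lt (by
    refine tdSet_le _ ((grpRank W).toNat) fun t ht hind => indep_card_le_toNat _ hW ht hind)
    (Cardinal.nat_lt_aleph0 _)
  have hfV : td V < Cardinal.aleph0 := lt_of_le_of_lt (by
    refine tdSet_le _ ((grpRank V).toNat) fun t ht hind => indep_card_le_toNat _ hV ht hind)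
    (Cardinal.nat_lt_aleph0 _)
  have hfU : tdSet (gset W ∪ gset V) < Cardinal.aleph0 :=
    lt_of_le_of_lt (tdSet_le _ n hbound) (Cardinal.nat_lt_aleph0 _)
  have hfI : tdSet (gset W ∩ gset V) < Cardinal.aleph0 := by
    refine lt_of_le_of_lt (tdSet_le _ n fun t ht hind => hbound t
      (ht.trans (Set.inter_subset_left.trans Set.subset_union_left)) hind) (Cardinal.nat_lt_aleph0 _)
  rw [h1, h2]
  have hsub' : tdSet (gset W ∪ gset V) + tdSet (gset W ∩ gset V) ≤ td W + td V := hsub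
  have := Cardinal.toNat_le_toNat hsub' (Cardinal.add_lt_aleph0 hfW hfV)
  rwa [Cardinal.toNat_add hfU hfI, Cardinal.toNat_add hfW hfV] at this

theorem rank_toNat_supermodular (G W V : Subgroup Kˣ) (hW : FiniteRank W) (hV : FiniteRank V) :
    (grpRank (W ⊓ G)).toNat + (grpRank (V ⊓ G)).toNat ≤
      (grpRank ((W ⊔ V) ⊓ G)).toNat + (grpRank ((W ⊓ V) ⊓ G)).toNat := by
  have hkey := grpRank_sup_add_inf (W ⊓ G) (V ⊓ G)
  have hinf : (W ⊓ G) ⊓ (V ⊓ G) = (W ⊓ V) ⊓ G := by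
    ext x
    simp only [Subgroup.mem_inf]
    tauto
  have hle : (W ⊓ G) ⊔ (V ⊓ G) ≤ (W ⊔ V) ⊓ G := by
    refine sup_le (le_inf (le_trans inf_le_left le_sup_left) inf_le_right)
      (le_inf (le_trans inf_le_left le_sup_right) inf_le_right)
  have hWV : FiniteRank (W ⊔ V) :=
    lt_of_le_of_lt (grpRank_sup_le W V) (Cardinal.add_lt_aleph0 hW hV)
  have hf1 : grpRank ((W ⊔ V) ⊓ G) < Cardinal.aleph0 :=
    lt_of_le_of_lt (grpRank_mono inf_le_left) hWV
  have hf2 : grpRank ((W ⊓ V) ⊓ G) < Cardinal.aleph0 :=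
    lt_of_le_of_lt (grpRank_mono (le_trans inf_le_left inf_le_left)) hW
  have hf3 : grpRank (W ⊓ G) < Cardinal.aleph0 := lt_of_le_of_lt (grpRank_mono inf_le_left) hW
  have hf4 : grpRank (V ⊓ G) < Cardinal.aleph0 := lt_of_le_of_lt (grpRank_mono inf_le_left) hV
  have hsupfin : grpRank ((W ⊓ G) ⊔ (V ⊓ G)) < Cardinal.aleph0 :=
    lt_of_le_of_lt (grpRank_mono hle) hf1
  have hc : grpRank (W ⊓ G) + grpRank (V ⊓ G) ≤
      grpRank ((W ⊔ V) ⊓ G) + grpRank ((W ⊓ V) ⊓ G) := by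
    rw [← hkey, hinf]
    exact add_le_add_left (grpRank_mono hle) _
  have := Cardinal.toNat_le_toNat hc (Cardinal.add_lt_aleph0 hf1 hf2)
  rwa [Cardinal.toNat_add hf3 hf4, Cardinal.toNat_add hf1 hf2] at this

theorem delta_submodular (G W V : Subgroup Kˣ) (hW : FiniteRank W) (hV : FiniteRank V) :
    delta G (W ⊔ V) + delta G (W ⊓ V) ≤ delta G W + delta G V := by
  have h1 := td_toNat_submodular W V hW hV
  have h2 := rank_toNat_supermodular G W V hW hV
  unfold delta
  push_cast
  omega


end Aux

/-- The dimension function associated to the predimension `δ`: assuming there is a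
finite-rank strong subgroup `X₀` of `Kˣ`, there is a function `d` on finite subsets
`S` of `Kˣ` such that `d S` is the minimum of `{δ(W) : W finite-rank subgroup, X₀ ∪ S ⊆ W}`,
and `d` satisfies the exchange-type closure axiom:
if `d(X ∪ Y) = d(Y)` then `d(X ∪ Y ∪ Z) = d(Y ∪ Z)`. -/
theorem dimension_function_exists {K : Type*} [Field K] [CharZero K] (G X₀ : Subgroup Kˣ)
    (hX₀fr : FiniteRank X₀) (hX₀s : Strong G X₀) :
    ∃ d : Set Kˣ → ℤ,
      (∀ S : Set Kˣ, S.Finite →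
        IsLeast {n : ℤ | ∃ W : Subgroup Kˣ,
          FiniteRank W ∧ X₀ ≤ W ∧ S ⊆ (W : Set Kˣ) ∧ delta G W = n} (d S)) ∧
      (∀ X Y Z : Set Kˣ, X.Finite → Y.Finite → Z.Finite →
        d (X ∪ Y) = d Y → d (X ∪ Y ∪ Z) = d (Y ∪ Z)) := by
  classical
  set D : Set Kˣ → Set ℤ := fun S => {n : ℤ | ∃ W : Subgroup Kˣ,
    FiniteRank W ∧ X₀ ≤ W ∧ S ⊆ (W : Set Kˣ) ∧ delta G W = n} with hD
  have hex : ∀ S : Set Kˣ, S.Finite → ∃ m, IsLeast (D S) m := by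
    intro S hS
    have hne : ∃ n, n ∈ D S := by
      refine ⟨delta G (X₀ ⊔ Subgroup.closure S), X₀ ⊔ Subgroup.closure S, ?_, le_sup_left, ?_, rfl⟩
      · have h1 : grpRank (Subgroup.closure S) < Cardinal.aleph0 := by
          have : S = (↑hS.toFinset : Set Kˣ) := hS.coe_toFinset.symm
          rw [this]
          exact lt_of_le_of_lt (grpRank_closure_le hS.toFinset) (Cardinal.nat_lt_aleph0 _)
        exact lt_of_le_of_lt (grpRank_sup_le _ _) (Cardinal.add_lt_aleph0 hX₀fr h1)
      · intro u hu
        exact Subgroup.mem_sup_right (Subgroup.subset_closure hu)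
    have hbdd : ∀ n ∈ D S, delta G X₀ ≤ n := by
      rintro n ⟨W, hfr, hle, _, rfl⟩
      exact hX₀s W hfr hle le_top
    obtain ⟨lb, hlb1, hlb2⟩ := Int.exists_least_of_bdd
      ⟨delta G X₀, fun z hz => hbdd z hz⟩ hne
    exact ⟨lb, hlb1, hlb2⟩
  set d : Set Kˣ → ℤ := fun S => if h : ∃ m, IsLeast (D S) m then h.choose else 0 with hd
  have hdS : ∀ S : Set Kˣ, S.Finite → IsLeast (D S) (d S) := by
    intro S hS
    have h := hex S hS
    rw [hd]
    simp only [dif_pos h]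
    exact h.choose_spec
  refine ⟨d, hdS, ?_⟩
  intro X Y Z hX hY hZ h
  have hXY := hdS _ (hX.union hY)
  have hY' := hdS _ hY
  have hYZ := hdS _ (hY.union hZ)
  have hXYZ := hdS _ ((hX.union hY).union hZ)
  -- d (Y ∪ Z) ≤ d (X ∪ Y ∪ Z)
  have hge : d (Y ∪ Z) ≤ d (X ∪ Y ∪ Z) := by
    obtain ⟨W, hfr, hle, hsub, hδ⟩ := hXYZ.1
    refine le_trans (hYZ.2 ?_) (le_of_eq hδ)
    exact ⟨W, hfr, hle, fun u hu => hsub (by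
      rcases hu with hu | hu
      · exact Or.inl (Or.inr hu)
      · exact Or.inr hu), rfl⟩
  -- d (X ∪ Y ∪ Z) ≤ d (Y ∪ Z)
  have hle2 : d (X ∪ Y ∪ Z) ≤ d (Y ∪ Z) := by
    obtain ⟨W, hWfr, hWle, hWsub, hWδ⟩ := hXY.1
    obtain ⟨V, hVfr, hVle, hVsub, hVδ⟩ := hYZ.1
    have hWVfr : FiniteRank (W ⊔ V) :=
      lt_of_le_of_lt (grpRank_sup_le W V) (Cardinal.add_lt_aleph0 hWfr hVfr)
    have hWiVfr : FiniteRank (W ⊓ V) := lt_of_le_of_lt (grpRank_mono inf_le_left) hWfr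
    -- W ⊓ V works for Y
    have hY2 : delta G (W ⊓ V) ∈ D Y := by
      refine ⟨W ⊓ V, hWiVfr, le_inf hWle hVle, fun u hu => ?_, rfl⟩
      exact ⟨hWsub (Or.inr hu), hVsub (Or.inl hu)⟩
    have hdY : d Y ≤ delta G (W ⊓ V) := hY'.2 hY2
    -- W ⊔ V works for X ∪ Y ∪ Z
    have hXYZ2 : delta G (W ⊔ V) ∈ D (X ∪ Y ∪ Z) := by
      refine ⟨W ⊔ V, hWVfr, le_trans hWle le_sup_left, fun u hu => ?_, rfl⟩
      rcases hu with (hu | hu) | hu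
      · exact Subgroup.mem_sup_left (hWsub (Or.inl hu))
      · exact Subgroup.mem_sup_left (hWsub (Or.inr hu))
      · exact Subgroup.mem_sup_right (hVsub (Or.inr hu))
    have hdXYZ : d (X ∪ Y ∪ Z) ≤ delta G (W ⊔ V) := hXYZ.2 hXYZ2
    have hsm := delta_submodular G W V hWfr hVfr
    have hWd : delta G W = d Y := by rw [hWδ, h]
    omega
  omega


end GreenPoints

end
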